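/- For every 1-periodic C¹ function f : ℝ → ℝ with zero average over [0,1], the Wirtinger inequality ∫₀¹ f(x)² dx ≤ (1/(4π²)) ∫₀¹ f'(x)² dx holds. -/

import Mathlib

open MeasureTheory Complex Real intervalIntegral Set AddCircle

lemma wirtinger_parseval_aux (h : ℝ → ℂ) (hc : Continuous h) (hp : Function.Periodic h 1) :
    ((∫ x in (0:ℝ)..1, ‖h x‖ ^ 2) = ∑' n : ℤ, ‖fourierCoeff hp.lift n‖ ^ 2 ∧
      Summable (fun n : ℤ => ‖fourierCoeff hp.lift n‖ ^ 2)) := by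
  haveI : Fact ((0:ℝ) < 1) := ⟨one_pos⟩
  have hlift : Continuous hp.lift := continuous_coinduced_dom.mpr hc
  set G : C(AddCircle (1:ℝ), ℂ) := ⟨hp.lift, hlift⟩ with hG
  set F := ContinuousMap.toLp (E := ℂ) 2 haarAddCircle ℂ G with hF
  have hcoeff : ∀ n, fourierCoeff (⇑F) n = fourierCoeff hp.lift n := fun n => fourierCoeff_toLp G n
  have hpars := tsum_sq_fourierCoeff F
  have hint : (∫ t : AddCircle (1:ℝ), ‖F t‖ ^ 2 ∂haarAddCircle) = ∫ x in (0:ℝ)..1, ‖h x‖ ^ 2 := by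
    have h1 : (⇑F : AddCircle (1:ℝ) → ℂ) =ᵐ[haarAddCircle] ⇑G :=
      ContinuousMap.coeFn_toAEEqFun haarAddCircle G
    have h2 : (∫ t : AddCircle (1:ℝ), ‖F t‖ ^ 2 ∂haarAddCircle)
        = ∫ t : AddCircle (1:ℝ), ‖G t‖ ^ 2 ∂haarAddCircle := by
      refine integral_congr_ae ?_
      filter_upwards [h1] with t ht; rw [ht]
    have h3 : (volume : Measure (AddCircle (1:ℝ))) = haarAddCircle := by
      rw [volume_eq_smul_haarAddCircle]; norm_num
    have h4 := AddCircle.integral_preimage (1:ℝ) 0 (fun t => ‖G t‖ ^ 2)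
    rw [h2, ← h3, ← h4, intervalIntegral.integral_of_le (by norm_num : (0:ℝ) ≤ 1)]
    norm_num
    rfl
  constructor
  · rw [← hint, ← hpars]
    exact tsum_congr fun n => by rw [hcoeff]
  · have hm : Memℓp (fun i => fourierBasis.repr F i) 2 := (fourierBasis.repr F).2
    have := hm.summable (by norm_num)
    simp only [fourierBasis_repr] at this
    refine this.congr fun n => ?_
    rw [hcoeff n, ← Real.rpow_natCast ‖fourierCoeff hp.lift n‖ 2]
    norm_num

theorem wirtinger_inequality_periodic
    (f : ℝ → ℝ) (hf : ContDiff ℝ 1 f) (hper : Function.Periodic f 1)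
    (hmean : ∫ x in (0:ℝ)..1, f x = 0) :
    ∫ x in (0:ℝ)..1, (f x) ^ 2 ≤
      (1 / (4 * Real.pi ^ 2)) * ∫ x in (0:ℝ)..1, (deriv f x) ^ 2 := by
  haveI : Fact ((0:ℝ) < 1) := ⟨one_pos⟩
  have hfc : Continuous f := hf.continuous
  have hdc : Continuous (deriv f) := hf.continuous_deriv le_rfl
  have hd : ∀ x, HasDerivAt f (deriv f x) x := fun x => (hf.differentiable one_ne_zero x).hasDerivAt
  have hdper : Function.Periodic (deriv f) 1 := by
    intro x
    have h1 : HasDerivAt f (deriv f (x + 1)) x := by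
      have h2 := (hd (x + 1)).comp x ((hasDerivAt_id x).add_const 1)
      simpa only [Function.comp_def, id_eq, mul_one, hper _] using h2
    exact h1.deriv.symm
  set g : ℝ → ℂ := fun x => (f x : ℂ) with hgdef
  set g' : ℝ → ℂ := fun x => ((deriv f x : ℝ) : ℂ) with hg'def
  have hgper : Function.Periodic g 1 := fun x => by simp only [hgdef]; exact_mod_cast hper x
  have hg'per : Function.Periodic g' 1 := fun x => by simp only [hg'def]; exact_mod_cast hdper x
  have hgc : Continuous g := Complex.continuous_ofReal.comp hfc
  have hg'c : Continuous g' := Complex.continuous_ofReal.comp hdc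
  obtain ⟨hA, hAs⟩ := wirtinger_parseval_aux g hgc hgper
  obtain ⟨hB, hBs⟩ := wirtinger_parseval_aux g' hg'c hg'per
  have hOn : ∀ n : ℤ, fourierCoeff hgper.lift n = fourierCoeffOn one_pos g n := by
    intro n
    rw [fourierCoeff_eq_intervalIntegral _ n 0, fourierCoeffOn_eq_integral]
    norm_num
  have hOn' : ∀ n : ℤ, fourierCoeff hg'per.lift n = fourierCoeffOn one_pos g' n := by
    intro n
    rw [fourierCoeff_eq_intervalIntegral _ n 0, fourierCoeffOn_eq_integral]
    norm_num
  have hc0 : fourierCoeff hgper.lift 0 = 0 := by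
    rw [hOn 0, fourierCoeffOn_eq_integral]
    simp only [neg_zero, fourier_zero, one_smul, sub_zero, div_one, one_smul]
    rw [intervalIntegral.integral_ofReal, hmean]
    norm_num
  have hrel : ∀ n : ℤ, n ≠ 0 →
      fourierCoeffOn one_pos g n = 1 / (2 * ↑π * Complex.I * n) * fourierCoeffOn one_pos g' n := by
    intro n hn
    have h2 := fourierCoeffOn_of_hasDerivAt one_pos hn
      (fun x _ => (hd x).ofReal_comp) (hg'c.intervalIntegrable 0 1)
    have hg10 : g 1 - g 0 = 0 := by
      have := hgper 0
      simp only [zero_add] at this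
      rw [this, sub_self]
    rw [hg10] at h2
    rw [h2]
    have hpi : (π : ℂ) ≠ 0 := Complex.ofReal_ne_zero.mpr Real.pi_ne_zero
    have hnc : (n : ℂ) ≠ 0 := Int.cast_ne_zero.mpr hn
    field_simp
    simp [hg'def]
  have key : ∀ n : ℤ, ‖fourierCoeff hgper.lift n‖ ^ 2 ≤
      (1 / (4 * π ^ 2)) * ‖fourierCoeff hg'per.lift n‖ ^ 2 := by
    intro n
    rcases eq_or_ne n 0 with rfl | hn
    · rw [hc0]
      simp only [norm_zero, ne_eq, OfNat.ofNat_ne_zero, not_false_eq_true, zero_pow]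
      positivity
    · rw [hOn, hOn', hrel n hn, norm_mul]
      have hnormc : ‖(1:ℂ) / (2 * ↑π * Complex.I * n)‖ = 1 / (2 * π * |(n:ℝ)|) := by
        rw [norm_div, norm_one, norm_mul, norm_mul, norm_mul]
        simp [abs_of_pos Real.pi_pos]
      rw [hnormc, mul_pow, div_pow, one_pow]
      have hn1 : (1:ℝ) ≤ |(n:ℝ)| := by
        rw [← Int.cast_abs]
        exact_mod_cast Int.one_le_abs hn
      have h4 : (4 * π ^ 2) ≤ (2 * π * |(n:ℝ)|) ^ 2 := by
        have : (2 * π * 1) ^ 2 ≤ (2 * π * |(n:ℝ)|) ^ 2 := by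
          apply pow_le_pow_left₀ (by positivity)
          nlinarith [Real.pi_pos]
        nlinarith [Real.pi_pos]
      have := one_div_le_one_div_of_le (by positivity : (0:ℝ) < 4 * π ^ 2) h4
      apply mul_le_mul_of_nonneg_right this (by positivity)
  have hint1 : (∫ x in (0:ℝ)..1, (f x) ^ 2) = ∫ x in (0:ℝ)..1, ‖g x‖ ^ 2 := by
    apply intervalIntegral.integral_congr
    intro x _
    simp [hgdef, Complex.norm_real, Real.norm_eq_abs, sq_abs]
  have hint2 : (∫ x in (0:ℝ)..1, (deriv f x) ^ 2) = ∫ x in (0:ℝ)..1, ‖g' x‖ ^ 2 := by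
    apply intervalIntegral.integral_congr
    intro x _
    simp [hg'def, Complex.norm_real, Real.norm_eq_abs, sq_abs]
  rw [hint1, hint2, hA, hB]
  calc (∑' n : ℤ, ‖fourierCoeff hgper.lift n‖ ^ 2)
      ≤ ∑' n : ℤ, (1 / (4 * π ^ 2)) * ‖fourierCoeff hg'per.lift n‖ ^ 2 :=
        Summable.tsum_le_tsum key hAs (hBs.mul_left _)
    _ = (1 / (4 * π ^ 2)) * ∑' n : ℤ, ‖fourierCoeff hg'per.lift n‖ ^ 2 := tsum_mul_left
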